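/- arXiv:1706.09860 — 2 statements merged into one kernel-verified Lean document; each statement's English description precedes it below -/
import Mathlib

section
/- If x ∈ ℓ∞ \ c₀ (x is a bounded sequence not converging to 0), then there exists a Dunford-Schwartz operator T on ℓ∞ such that the averages (1/n) Σ_{k=0}^{n−1} T^k(x) fail to converge coordinatewise. -/
open Filter Finset Topology

/-- The supremum norm of a real sequence. -/
noncomputable def supNorm (x : ℕ → ℝ) : ℝ := ⨆ n, |x n|

/-- `x` is a bounded sequence (i.e. `x ∈ ℓ∞`). -/
def IsBdd (x : ℕ → ℝ) : Prop := ∃ C, ∀ n, |x n| ≤ C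

/-- The non-increasing rearrangement of a bounded sequence, `0`-indexed:
`(x*)_n = inf over finite F with card F ≤ n of sup_{k ∉ F} |x k|`. -/
noncomputable def rearr (x : ℕ → ℝ) (n : ℕ) : ℝ :=
  sInf { r : ℝ | ∃ F : Finset ℕ, F.card ≤ n ∧ r = ⨆ k : {k : ℕ // k ∉ F}, |x k.1| }

/-- A Dunford–Schwartz operator: a linear operator which is an `ℓ₁`-contraction
and an `ℓ∞`-contraction. -/
def IsDS (T : (ℕ → ℝ) →ₗ[ℝ] (ℕ → ℝ)) : Prop :=
  (∀ x : ℕ → ℝ, Summable (fun n => |x n|) →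
      Summable (fun n => |T x n|) ∧ ∑' n, |T x n| ≤ ∑' n, |x n|) ∧
  (∀ x : ℕ → ℝ, IsBdd x → IsBdd (T x) ∧ supNorm (T x) ≤ supNorm x)

/-- The Cesàro average `A(n,T)(x) = (1/n) ∑_{k=0}^{n-1} T^k x`. -/
noncomputable def cesaro (T : (ℕ → ℝ) →ₗ[ℝ] (ℕ → ℝ)) (n : ℕ) (x : ℕ → ℝ) : ℕ → ℝ :=
  fun s => (∑ k ∈ Finset.range n, (⇑T)^[k] x s) / n

/-- The weighted composition operator `y ↦ fun s => a s * y (τ s)`. -/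
def opT (τ : ℕ → ℕ) (a : ℕ → ℝ) : (ℕ → ℝ) →ₗ[ℝ] (ℕ → ℝ) where
  toFun y := fun s => a s * y (τ s)
  map_add' y z := by funext s; simp [mul_add]
  map_smul' r y := by funext s; simp; ring

lemma opT_apply (τ : ℕ → ℕ) (a : ℕ → ℝ) (y : ℕ → ℝ) (s : ℕ) :
    opT τ a y s = a s * y (τ s) := rfl

lemma opT_isDS (τ : ℕ → ℕ) (hτ : Function.Injective τ) (a : ℕ → ℝ)
    (ha : ∀ s, |a s| = 1) : IsDS (opT τ a) := by
  constructor
  · intro y hy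
    have habs : (fun n => |opT τ a y n|) = fun n => |y (τ n)| := by
      funext n; rw [opT_apply, abs_mul, ha, one_mul]
    have hsum : Summable fun n => |y (τ n)| := hy.comp_injective hτ
    rw [habs]
    refine ⟨hsum, ?_⟩
    exact Summable.tsum_le_tsum_of_inj τ hτ (fun c _ => abs_nonneg _) (fun n => le_rfl) hsum hy
  · intro y hy
    obtain ⟨C, hC⟩ := hy
    have hb : ∀ s, |opT τ a y s| = |y (τ s)| := by
      intro s; rw [opT_apply, abs_mul, ha, one_mul]
    refine ⟨⟨C, fun n => (hb n).le.trans (hC _)⟩, ?_⟩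
    have hbdd : BddAbove (Set.range fun n => |y n|) := ⟨C, by rintro r ⟨n, rfl⟩; exact hC n⟩
    refine ciSup_le fun s => ?_
    rw [hb]
    exact le_ciSup hbdd (τ s)

/-- For any bounded sequence `x` not converging to `0` there is a Dunford–Schwartz
operator whose Cesàro averages of `x` fail to converge coordinatewise. -/
theorem stmt13 (x : ℕ → ℝ) (hx : IsBdd x) (hx0 : ¬ Tendsto x atTop (nhds 0)) :
    ∃ T : (ℕ → ℝ) →ₗ[ℝ] (ℕ → ℝ), IsDS T ∧
      ∃ s : ℕ, ∀ L : ℝ, ¬ Tendsto (fun n => cesaro T n x s) atTop (nhds L) := by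
  classical
  -- extract ε and a subsequence where |x| ≥ ε
  have hfreq : ∃ ε > (0:ℝ), ∃ᶠ n in atTop, ε ≤ |x n| := by
    rw [Metric.tendsto_atTop] at hx0
    push_neg at hx0
    obtain ⟨ε, hε, h⟩ := hx0
    refine ⟨ε, hε, frequently_atTop.mpr fun N => ?_⟩
    obtain ⟨n, hn, h'⟩ := h N
    exact ⟨n, hn, by simpa [Real.dist_eq] using h'⟩
  obtain ⟨ε, hε, hfr⟩ := hfreq
  obtain ⟨m, hm, hmε⟩ := extraction_of_frequently_atTop hfr
  obtain ⟨C, hC⟩ := hx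
  have hminj : Function.Injective m := hm.injective
  have hxm : ∀ k, x (m k) ≠ 0 := by
    intro k h
    have := hmε k
    rw [h, abs_zero] at this
    linarith
  -- the shift along the subsequence
  set τ : ℕ → ℕ := fun s => if h : ∃ k, m k = s then m (h.choose + 1) else s with hτdef
  have hτm : ∀ k, τ (m k) = m (k + 1) := by
    intro k
    have hex : ∃ j, m j = m k := ⟨k, rfl⟩
    have h1 : τ (m k) = m (hex.choose + 1) := dif_pos hex
    rw [h1, hminj hex.choose_spec]
  have hτnot : ∀ s, (¬ ∃ k, m k = s) → τ s = s := fun s h => dif_neg h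
  have hτinj : Function.Injective τ := by
    intro s t hst
    by_cases hs : ∃ k, m k = s <;> by_cases ht : ∃ k, m k = t
    · obtain ⟨k, rfl⟩ := hs; obtain ⟨l, rfl⟩ := ht
      rw [hτm, hτm] at hst
      have hkl := hminj hst
      exact congrArg m (by omega)
    · obtain ⟨k, rfl⟩ := hs
      rw [hτm, hτnot t ht] at hst
      exact absurd ⟨k + 1, hst⟩ ht
    · obtain ⟨l, rfl⟩ := ht
      rw [hτm, hτnot s hs] at hst
      exact absurd ⟨l + 1, hst.symm⟩ hs
    · rw [hτnot s hs, hτnot t ht] at hst; exact hst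
  -- the block-length parameter
  set M : ℕ := max (⌈2 * (C + ε) / ε⌉₊) 2 with hMdef
  have hM2 : 2 ≤ M := le_max_right _ _
  have hMC : 2 * (C + ε) / ε ≤ (M : ℝ) :=
    le_trans (Nat.le_ceil _) (Nat.cast_le.mpr (le_max_left _ _))
  have hMε : C + ε ≤ ε / 2 * M := by
    rw [div_le_iff₀ hε] at hMC
    nlinarith
  -- the signs
  set e : ℕ → ℝ := fun k => (-1 : ℝ) ^ (Nat.log M (k + 1)) with hedef
  have he1 : ∀ k, |e k| = 1 := by intro k; simp [hedef, abs_pow]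
  set c : ℕ → ℝ := fun k => e k * |x (m k)| / x (m k) with hcdef
  have hc1 : ∀ k, |c k| = 1 := by
    intro k
    rw [hcdef]
    rw [abs_div, abs_mul, he1, abs_abs, one_mul, div_self (abs_ne_zero.mpr (hxm k))]
  have hc2 : ∀ k, c k * c k = 1 := by
    intro k
    have := hc1 k
    rw [abs_eq zero_le_one] at this
    rcases this with h | h <;> rw [h] <;> norm_num
  have hcx : ∀ k, c k * x (m k) = e k * |x (m k)| := by
    intro k
    rw [hcdef]
    exact div_mul_cancel₀ _ (hxm k)
  set a : ℕ → ℝ := fun s => if h : ∃ k, m k = s then c (h.choose + 1) * c h.choose else 1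
    with hadef
  have ham : ∀ k, a (m k) = c (k + 1) * c k := by
    intro k
    have hex : ∃ j, m j = m k := ⟨k, rfl⟩
    have h1 : a (m k) = c (hex.choose + 1) * c hex.choose := dif_pos hex
    rw [h1, hminj hex.choose_spec]
  have ha1 : ∀ s, |a s| = 1 := by
    intro s
    by_cases h : ∃ k, m k = s
    · obtain ⟨k, rfl⟩ := h
      rw [ham, abs_mul, hc1, hc1, one_mul]
    · rw [hadef]
      simp only [dif_neg h, abs_one]
  refine ⟨opT τ a, opT_isDS τ hτinj a ha1, m 0, ?_⟩
  -- the iterates along the orbit of m 0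
  have hiter : ∀ (k : ℕ) (y : ℕ → ℝ),
      (⇑(opT τ a))^[k] y (m 0) = (∏ j ∈ Finset.range k, a (m j)) * y (m k) := by
    intro k
    induction k with
    | zero => intro y; simp
    | succ k ih =>
      intro y
      rw [Function.iterate_succ_apply, ih (opT τ a y), opT_apply, hτm, Finset.prod_range_succ]
      ring
  have hprod : ∀ k, ∏ j ∈ Finset.range k, a (m j) = c k * c 0 := by
    intro k
    induction k with
    | zero => rw [Finset.prod_range_zero]; exact (hc2 0).symm
    | succ k ih =>
      rw [Finset.prod_range_succ, ih, ham]
      calc c k * c 0 * (c (k + 1) * c k) = c k * c k * (c (k + 1) * c 0) := by ring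
        _ = c (k + 1) * c 0 := by rw [hc2, one_mul]
  have hTkx : ∀ k, (⇑(opT τ a))^[k] x (m 0) = c 0 * (e k * |x (m k)|) := by
    intro k
    rw [hiter, hprod]
    calc c k * c 0 * x (m k) = c 0 * (c k * x (m k)) := by ring
      _ = _ := by rw [hcx]
  have hces : ∀ n, cesaro (opT τ a) n x (m 0)
      = c 0 * ((∑ k ∈ Finset.range n, e k * |x (m k)|) / n) := by
    intro n
    simp only [cesaro, hTkx]
    rw [← Finset.mul_sum, mul_div_assoc]
  -- the key lower bound for block sums
  have hεC : ε ≤ C := le_trans (hmε 0) (hC (m 0))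
  have hkey : ∀ j : ℕ, ε / 2 * (M : ℝ) ^ (j + 1)
      ≤ (-1 : ℝ) ^ j * ∑ k ∈ Finset.range (M ^ (j + 1) - 1), e k * |x (m k)| := by
    intro j
    have h1 : (1 : ℕ) ≤ M ^ j := Nat.one_le_pow _ _ (by omega)
    have hpow : M ^ j * 2 ≤ M ^ (j + 1) := by
      rw [pow_succ]
      exact Nat.mul_le_mul_left _ hM2
    have hle : M ^ j - 1 ≤ M ^ (j + 1) - 1 := by omega
    rw [← Finset.sum_range_add_sum_Ico _ hle]
    have hek : ∀ k ∈ Finset.Ico (M ^ j - 1) (M ^ (j + 1) - 1), e k = (-1 : ℝ) ^ j := by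
      intro k hk
      simp only [Finset.mem_Ico] at hk
      have hlog : Nat.log M (k + 1) = j :=
        Nat.log_eq_of_pow_le_of_lt_pow (by omega) (by omega)
      simp [hedef, hlog]
    have hIco : ∑ k ∈ Finset.Ico (M ^ j - 1) (M ^ (j + 1) - 1), e k * |x (m k)|
        = (-1 : ℝ) ^ j * ∑ k ∈ Finset.Ico (M ^ j - 1) (M ^ (j + 1) - 1), |x (m k)| := by
      rw [Finset.mul_sum]
      exact Finset.sum_congr rfl fun k hk => by rw [hek k hk]
    have hS1 : abs (∑ k ∈ Finset.range (M ^ j - 1), e k * |x (m k)|) ≤ C * ((M : ℝ) ^ j - 1) := by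
      calc abs (∑ k ∈ Finset.range (M ^ j - 1), e k * |x (m k)|)
          ≤ ∑ k ∈ Finset.range (M ^ j - 1), abs (e k * |x (m k)|) :=
            Finset.abs_sum_le_sum_abs _ _
        _ ≤ ∑ k ∈ Finset.range (M ^ j - 1), C := by
            refine Finset.sum_le_sum fun k _ => ?_
            rw [abs_mul, he1, one_mul, abs_abs]
            exact hC _
        _ = C * ((M : ℝ) ^ j - 1) := by
            rw [Finset.sum_const, Finset.card_range, nsmul_eq_mul]
            push_cast [h1]
            ring
    have hS2 : ε * ((M : ℝ) ^ (j + 1) - (M : ℝ) ^ j)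
        ≤ ∑ k ∈ Finset.Ico (M ^ j - 1) (M ^ (j + 1) - 1), |x (m k)| := by
      have hcard : (Finset.Ico (M ^ j - 1) (M ^ (j + 1) - 1)).card = M ^ (j + 1) - M ^ j := by
        rw [Nat.card_Ico]; omega
      have := Finset.card_nsmul_le_sum (Finset.Ico (M ^ j - 1) (M ^ (j + 1) - 1))
        (fun k => |x (m k)|) ε (fun k _ => hmε k)
      rw [hcard, nsmul_eq_mul] at this
      have hcast : ((M ^ (j + 1) - M ^ j : ℕ) : ℝ) = (M : ℝ) ^ (j + 1) - (M : ℝ) ^ j := by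
        have hle2 : M ^ j ≤ M ^ (j + 1) := Nat.pow_le_pow_right (by omega) (by omega)
        rw [Nat.cast_sub hle2, Nat.cast_pow, Nat.cast_pow]
      rw [hcast] at this
      linarith
    have hsq : ((-1 : ℝ) ^ j) * ((-1 : ℝ) ^ j) = 1 := by
      rw [← mul_pow]; norm_num
    have hA : -(C * ((M : ℝ) ^ j - 1))
        ≤ (-1 : ℝ) ^ j * ∑ k ∈ Finset.range (M ^ j - 1), e k * |x (m k)| := by
      have h1' := neg_abs_le ((-1 : ℝ) ^ j * ∑ k ∈ Finset.range (M ^ j - 1), e k * |x (m k)|)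
      have h2' : abs ((-1 : ℝ) ^ j * ∑ k ∈ Finset.range (M ^ j - 1), e k * |x (m k)|)
          ≤ C * ((M : ℝ) ^ j - 1) := by
        rw [abs_mul, abs_pow, abs_neg, abs_one, one_pow, one_mul]
        exact hS1
      linarith
    rw [mul_add, hIco, ← mul_assoc, hsq, one_mul]
    have hMjpos : (0 : ℝ) < (M : ℝ) ^ j := by positivity
    have hCpos : (0 : ℝ) ≤ C := le_trans (abs_nonneg _) (hC 0)
    have hfact : (C + ε) * (M : ℝ) ^ j ≤ ε / 2 * ((M : ℝ) ^ j * M) := by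
      nlinarith [mul_le_mul_of_nonneg_right hMε hMjpos.le]
    have hQ : (M : ℝ) ^ (j + 1) = (M : ℝ) ^ j * M := pow_succ _ _
    rw [hQ] at hS2 ⊢
    nlinarith [hA, hS2, hfact, hCpos]
  -- conclude: the averages oscillate
  intro L hL
  have hc0 : c 0 * c 0 = 1 := hc2 0
  have hB : Tendsto (fun n : ℕ => (∑ k ∈ Finset.range n, e k * |x (m k)|) / n) atTop
      (nhds (c 0 * L)) := by
    have h := hL.const_mul (c 0)
    refine h.congr fun n => ?_
    rw [hces, ← mul_assoc, hc0, one_mul]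
  have hnpos : ∀ j : ℕ, (0 : ℝ) < ((M ^ (j + 1) - 1 : ℕ) : ℝ) := by
    intro j
    have : 2 ≤ M ^ (j + 1) := le_trans hM2 (Nat.le_self_pow (by omega) M)
    have : (1 : ℕ) ≤ M ^ (j + 1) - 1 := by omega
    exact_mod_cast Nat.lt_of_lt_of_le Nat.zero_lt_one this
  have hncast : ∀ j : ℕ, ((M ^ (j + 1) - 1 : ℕ) : ℝ) ≤ (M : ℝ) ^ (j + 1) := by
    intro j
    have h1 : (1 : ℕ) ≤ M ^ (j + 1) := Nat.one_le_pow _ _ (by omega)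
    push_cast [h1]
    linarith
  have hup : ∀ i : ℕ, ε / 2
      ≤ (∑ k ∈ Finset.range (M ^ (2 * i + 1) - 1), e k * |x (m k)|) / ((M ^ (2 * i + 1) - 1 : ℕ) : ℝ) := by
    intro i
    have hk := hkey (2 * i)
    rw [pow_mul, neg_one_sq, one_pow, one_mul] at hk
    rw [le_div_iff₀ (hnpos (2 * i))]
    calc ε / 2 * ((M ^ (2 * i + 1) - 1 : ℕ) : ℝ)
        ≤ ε / 2 * (M : ℝ) ^ (2 * i + 1) := by
          exact mul_le_mul_of_nonneg_left (hncast (2 * i)) (by linarith)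
      _ ≤ _ := hk
  have hdown : ∀ i : ℕ, (∑ k ∈ Finset.range (M ^ (2 * i + 2) - 1), e k * |x (m k)|) / ((M ^ (2 * i + 2) - 1 : ℕ) : ℝ)
      ≤ -(ε / 2) := by
    intro i
    have hk := hkey (2 * i + 1)
    have hodd : ((-1 : ℝ)) ^ (2 * i + 1) = -1 := Odd.neg_one_pow ⟨i, by ring⟩
    rw [hodd, neg_one_mul] at hk
    rw [div_le_iff₀ (hnpos (2 * i + 1)), neg_mul]
    have : ε / 2 * ((M ^ (2 * i + 2) - 1 : ℕ) : ℝ) ≤ ε / 2 * (M : ℝ) ^ (2 * i + 2) :=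
      mul_le_mul_of_nonneg_left (hncast (2 * i + 1)) (by linarith)
    linarith
  have hmono : ∀ f : ℕ → ℕ, (∀ i, i ≤ f i) → Tendsto f atTop atTop :=
    fun f hf => tendsto_atTop_mono hf tendsto_id
  have hgrow : ∀ i : ℕ, i ≤ M ^ (2 * i + 1) - 1 := by
    intro i
    have h2 : 2 ^ (2 * i + 1) ≤ M ^ (2 * i + 1) := Nat.pow_le_pow_left hM2 _
    have h3 : i < 2 ^ i := Nat.lt_two_pow_self
    have h4 : 2 ^ i ≤ 2 ^ (2 * i + 1) := Nat.pow_le_pow_right (by omega) (by omega)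
    omega
  have hgrow2 : ∀ i : ℕ, i ≤ M ^ (2 * i + 2) - 1 := by
    intro i
    have h2 : 2 ^ (2 * i + 2) ≤ M ^ (2 * i + 2) := Nat.pow_le_pow_left hM2 _
    have h3 : i < 2 ^ i := Nat.lt_two_pow_self
    have h4 : 2 ^ i ≤ 2 ^ (2 * i + 2) := Nat.pow_le_pow_right (by omega) (by omega)
    omega
  have hT1 : Tendsto (fun i : ℕ => (∑ k ∈ Finset.range (M ^ (2 * i + 1) - 1), e k * |x (m k)|)
      / ((M ^ (2 * i + 1) - 1 : ℕ) : ℝ)) atTop (nhds (c 0 * L)) :=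
    hB.comp (hmono _ hgrow)
  have hT2 : Tendsto (fun i : ℕ => (∑ k ∈ Finset.range (M ^ (2 * i + 2) - 1), e k * |x (m k)|)
      / ((M ^ (2 * i + 2) - 1 : ℕ) : ℝ)) atTop (nhds (c 0 * L)) :=
    hB.comp (hmono _ hgrow2)
  have h1 := ge_of_tendsto hT1 (Eventually.of_forall hup)
  have h2 := le_of_tendsto hT2 (Eventually.of_forall hdown)
  linarith
end

section
/- Let E be a fully symmetric sequence space. The following are equivalent: (i) for every x ∈ E and every Dunford-Schwartz operator T, the averages (1/n) Σ_{k=0}^{n−1} T^k(x) converge in supremum norm to some element of E; (ii) E ⊆ c₀; (iii) the constant sequence 𝟏 = (1,1,1,...) does not belong to E. -/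
open Filter Finset Topology

/-- A fully symmetric sequence space: a nonzero linear subspace of `ℓ∞` with a complete
norm `N` such that Hardy–Littlewood–Pólya majorization `x ≺ y`, `y ∈ E`, `x ∈ ℓ∞` imply
`x ∈ E` and `N x ≤ N y`. -/
structure FullySymmSeqSpace where
  carrier : Submodule ℝ (ℕ → ℝ)
  nontrivial : carrier ≠ ⊥
  bdd : ∀ x ∈ carrier, IsBdd x
  N : (ℕ → ℝ) → ℝ
  N_zero : N 0 = 0
  N_pos : ∀ x ∈ carrier, x ≠ 0 → 0 < N x
  N_add : ∀ x ∈ carrier, ∀ y ∈ carrier, N (x + y) ≤ N x + N y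
  N_smul : ∀ (c : ℝ), ∀ x ∈ carrier, N (c • x) = |c| * N x
  complete : ∀ f : ℕ → (ℕ → ℝ), (∀ k, f k ∈ carrier) →
    (∀ ε > 0, ∃ K, ∀ m ≥ K, ∀ n ≥ K, N (f m - f n) < ε) →
    ∃ x ∈ carrier, Filter.Tendsto (fun k => N (f k - x)) Filter.atTop (nhds 0)
  fullySymm : ∀ y ∈ carrier, ∀ x : ℕ → ℝ, IsBdd x →
    (∀ k, ∑ n ∈ Finset.range (k + 1), rearr x n ≤ ∑ n ∈ Finset.range (k + 1), rearr y n) →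
    x ∈ carrier ∧ N x ≤ N y

namespace Aux14

instance notMemFinset (F : Finset ℕ) : Nonempty {k : ℕ // k ∉ F} :=
  let ⟨a, ha⟩ := F.exists_notMem; ⟨⟨a, ha⟩⟩

lemma isBdd_bddAbove {x : ℕ → ℝ} (hx : IsBdd x) : BddAbove (Set.range fun n => |x n|) := by
  obtain ⟨C, hC⟩ := hx; exact ⟨C, by rintro r ⟨n, rfl⟩; exact hC n⟩

lemma isBdd_bddAbove' {x : ℕ → ℝ} (hx : IsBdd x) (F : Finset ℕ) :
    BddAbove (Set.range fun k : {k : ℕ // k ∉ F} => |x k.1|) := by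
  obtain ⟨C, hC⟩ := hx; exact ⟨C, by rintro r ⟨n, rfl⟩; exact hC n⟩

lemma abs_le_supNorm {x : ℕ → ℝ} (hx : IsBdd x) (n : ℕ) : |x n| ≤ supNorm x :=
  le_ciSup (isBdd_bddAbove hx) n

lemma supNorm_nonneg (x : ℕ → ℝ) : 0 ≤ supNorm x :=
  Real.iSup_nonneg fun n => abs_nonneg _

lemma supNorm_le {x : ℕ → ℝ} {C : ℝ} (h : ∀ n, |x n| ≤ C) : supNorm x ≤ C := ciSup_le h

lemma rearr_set_nonempty (x : ℕ → ℝ) (n : ℕ) :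
    { r : ℝ | ∃ F : Finset ℕ, F.card ≤ n ∧ r = ⨆ k : {k : ℕ // k ∉ F}, |x k.1| }.Nonempty :=
  ⟨_, ∅, by simp, rfl⟩

lemma rearr_set_bddBelow (x : ℕ → ℝ) (n : ℕ) :
    BddBelow { r : ℝ | ∃ F : Finset ℕ, F.card ≤ n ∧ r = ⨆ k : {k : ℕ // k ∉ F}, |x k.1| } := by
  refine ⟨0, ?_⟩
  rintro r ⟨F, hF, rfl⟩
  exact Real.iSup_nonneg fun k => abs_nonneg _

lemma rearr_nonneg (x : ℕ → ℝ) (n : ℕ) : 0 ≤ rearr x n :=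
  le_csInf (rearr_set_nonempty x n) (by rintro r ⟨F, hF, rfl⟩; exact Real.iSup_nonneg fun k => abs_nonneg _)

lemma rearr_le {x : ℕ → ℝ} {n : ℕ} {F : Finset ℕ} (hF : F.card ≤ n) :
    rearr x n ≤ ⨆ k : {k : ℕ // k ∉ F}, |x k.1| :=
  csInf_le (rearr_set_bddBelow x n) ⟨F, hF, rfl⟩

lemma le_rearr {x : ℕ → ℝ} (hx : IsBdd x) {n : ℕ} {c : ℝ}
    (h : ∀ F : Finset ℕ, F.card ≤ n → ∃ k, k ∉ F ∧ c ≤ |x k|) : c ≤ rearr x n := by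
  refine le_csInf (rearr_set_nonempty x n) ?_
  rintro r ⟨F, hF, rfl⟩
  obtain ⟨k, hk, hck⟩ := h F hF
  exact hck.trans (le_ciSup (isBdd_bddAbove' hx F) ⟨k, hk⟩)

lemma rearr_anti (x : ℕ → ℝ) {m n : ℕ} (h : m ≤ n) : rearr x n ≤ rearr x m :=
  csInf_le_csInf (rearr_set_bddBelow x n) (rearr_set_nonempty x m)
    (by rintro r ⟨F, hF, rfl⟩; exact ⟨F, hF.trans h, rfl⟩)

lemma rearr_le_add {a b : ℕ → ℝ} (hb : IsBdd b) {c : ℝ} (hc : 0 ≤ c)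
    (h : ∀ k, |a k| ≤ |b k| + c) (n : ℕ) : rearr a n ≤ rearr b n + c := by
  have key : ∀ r ∈ { r : ℝ | ∃ F : Finset ℕ, F.card ≤ n ∧ r = ⨆ k : {k : ℕ // k ∉ F}, |b k.1| },
      rearr a n - c ≤ r := by
    rintro r ⟨F, hF, rfl⟩
    have h1 : rearr a n ≤ ⨆ k : {k : ℕ // k ∉ F}, |a k.1| := rearr_le hF
    have h2 : (⨆ k : {k : ℕ // k ∉ F}, |a k.1|) ≤ (⨆ k : {k : ℕ // k ∉ F}, |b k.1|) + c :=
      ciSup_le fun k => (h k.1).trans (add_le_add_left (le_ciSup (isBdd_bddAbove' hb F) k) c)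
    linarith
  have := le_csInf (rearr_set_nonempty b n) key
  have hr : rearr a n - c ≤ rearr b n := this
  linarith

lemma rearr_mono {a b : ℕ → ℝ} (hb : IsBdd b) (h : ∀ k, |a k| ≤ |b k|) (n : ℕ) :
    rearr a n ≤ rearr b n := by
  have := rearr_le_add hb le_rfl (fun k => by simpa using h k) n
  simpa using this

lemma rearr_zero (n : ℕ) : rearr (fun _ => (0:ℝ)) n = 0 := by
  refine le_antisymm ?_ (rearr_nonneg _ n)
  have : rearr (fun _ => (0:ℝ)) n ≤ ⨆ k : {k : ℕ // k ∉ (∅ : Finset ℕ)}, |(0:ℝ)| :=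
    rearr_le (by simp)
  simpa using this

/-- `phi K x = ∑_{n<K} rearr x n`, the K-functional. -/
noncomputable def phi (K : ℕ) (x : ℕ → ℝ) : ℝ := ∑ n ∈ Finset.range K, rearr x n

lemma phi_nonneg (K : ℕ) (x : ℕ → ℝ) : 0 ≤ phi K x :=
  Finset.sum_nonneg fun n _ => rearr_nonneg x n

lemma sum_abs_le_phi {x : ℕ → ℝ} (hx : IsBdd x) (G : Finset ℕ) :
    ∑ k ∈ G, |x k| ≤ phi G.card x := by
  suffices H : ∀ n (G : Finset ℕ), G.card = n → ∑ k ∈ G, |x k| ≤ phi n x by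
    exact H G.card G rfl
  intro n
  induction n with
  | zero => intro G hn; simp [Finset.card_eq_zero.mp hn, phi]
  | succ n ih =>
    intro G hn
    have hne : G.Nonempty := Finset.card_pos.mp (by omega)
    obtain ⟨k₀, hk₀G, hk₀min⟩ := G.exists_min_image (fun k => |x k|) hne
    have hcard : (G.erase k₀).card = n := by
      rw [Finset.card_erase_of_mem hk₀G, hn]; omega
    have hmin : |x k₀| ≤ rearr x n := by
      refine le_rearr hx ?_
      intro F hF
      have : ¬ (G ⊆ F) := fun hsub => by
        have := Finset.card_le_card hsub; omega
      obtain ⟨k, hkG, hkF⟩ := Finset.not_subset.mp this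
      exact ⟨k, hkF, hk₀min k hkG⟩
    have hsum : ∑ k ∈ G, |x k| = ∑ k ∈ G.erase k₀, |x k| + |x k₀| := by
      rw [Finset.sum_erase_add _ _ hk₀G]
    rw [hsum, phi, Finset.sum_range_succ]
    exact add_le_add (by simpa [phi] using ih (G.erase k₀) hcard) hmin

end Aux14
namespace Aux14

lemma card_le_of_gt_rearr {x : ℕ → ℝ} (hx : IsBdd x) (K : ℕ) (t : Finset ℕ)
    (ht : ∀ k ∈ t, rearr x K < |x k|) : t.card ≤ K := by
  by_contra hgt
  push_neg at hgt
  obtain ⟨t', ht't, hcard⟩ := Finset.exists_subset_card_eq (by omega : K + 1 ≤ t.card)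
  have hne : t'.Nonempty := Finset.card_pos.mp (by omega)
  obtain ⟨k₀, hk₀, hmin⟩ := t'.exists_min_image (fun k => |x k|) hne
  have : |x k₀| ≤ rearr x K := by
    refine le_rearr hx ?_
    intro F hF
    have hns : ¬ (t' ⊆ F) := fun hsub => by have := Finset.card_le_card hsub; omega
    obtain ⟨k, hkt, hkF⟩ := Finset.not_subset.mp hns
    exact ⟨k, hkF, hmin k hkt⟩
  exact absurd this (not_le.mpr (ht k₀ (ht't hk₀)))

lemma exists_bad_finset {x : ℕ → ℝ} (hx : IsBdd x) (K : ℕ) :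
    ∃ S : Finset ℕ, S.card ≤ K ∧ ∀ k, rearr x K < |x k| → k ∈ S := by
  have hfin : {k : ℕ | rearr x K < |x k|}.Finite := by
    rw [← Set.not_infinite]
    intro hinf
    obtain ⟨t, hts, hcard⟩ := hinf.exists_subset_card_eq (K+1)
    have := card_le_of_gt_rearr hx K t (fun k hk => hts hk)
    omega
  refine ⟨hfin.toFinset, ?_, fun k hk => hfin.mem_toFinset.mpr hk⟩
  exact card_le_of_gt_rearr hx K hfin.toFinset (fun k hk => (hfin.mem_toFinset.mp hk))

/-- L2: optimal decomposition for the K-functional. -/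
lemma exists_decomp {x : ℕ → ℝ} (hx : IsBdd x) (K : ℕ) :
    ∃ u v : ℕ → ℝ, x = u + v ∧ (∃ S : Finset ℕ, ∀ k ∉ S, u k = 0) ∧
      Summable (fun n => |u n|) ∧ IsBdd v ∧
      (∑' n, |u n|) + K * supNorm v ≤ phi K x := by
  set t := rearr x K with htdef
  have ht0 : 0 ≤ t := rearr_nonneg x K
  set v : ℕ → ℝ := fun k => max (-t) (min t (x k)) with hvdef
  set u : ℕ → ℝ := fun k => x k - v k with hudef
  have hvabs : ∀ k, |v k| ≤ t := by
    intro k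
    rw [abs_le]
    exact ⟨le_max_left _ _, max_le (by linarith) (min_le_left _ _)⟩
  have huzero : ∀ k, |x k| ≤ t → u k = 0 := by
    intro k hk
    have h1 : x k ≤ t := (abs_le.mp hk).2
    have h2 : -t ≤ x k := (abs_le.mp hk).1
    simp only [hudef, hvdef]
    rw [min_eq_right h1, max_eq_right (by simpa using h2)]
    ring
  have huabs : ∀ k, t < |x k| → |u k| = |x k| - t := by
    intro k hk
    simp only [hudef, hvdef]
    rcases le_or_gt (x k) 0 with hneg | hpos
    · have habs : |x k| = -(x k) := abs_of_nonpos hneg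
      have hxk : x k < -t := by rw [habs] at hk; linarith
      rw [min_eq_right (by linarith), max_eq_left (by linarith)]
      rw [habs]
      rw [abs_of_nonpos (by linarith)]
      ring
    · have habs : |x k| = x k := abs_of_pos hpos
      have hxk : t < x k := by rwa [habs] at hk
      rw [min_eq_left (by linarith), max_eq_right (by linarith)]
      rw [habs, abs_of_nonneg (by linarith)]
  obtain ⟨S, hScard, hSmem⟩ := exists_bad_finset hx K
  set S₀ : Finset ℕ := S.filter (fun k => t < |x k|) with hS₀def
  have hS₀mem : ∀ k, t < |x k| ↔ k ∈ S₀ := by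
    intro k
    constructor
    · intro hk; exact Finset.mem_filter.mpr ⟨hSmem k hk, hk⟩
    · intro hk; exact (Finset.mem_filter.mp hk).2
  have huzero' : ∀ k ∉ S₀, u k = 0 := by
    intro k hk
    refine huzero k ?_
    by_contra h
    exact hk ((hS₀mem k).mp (not_le.mp h))
  have hsummable : Summable (fun n => |u n|) :=
    summable_of_ne_finset_zero (s := S₀) (fun k hk => by rw [huzero' k hk]; simp)
  have htsum : ∑' n, |u n| = ∑ k ∈ S₀, |u k| :=
    tsum_eq_sum (fun k hk => by rw [huzero' k hk]; simp)
  have hS₀card : S₀.card ≤ K := (Finset.card_filter_le _ _).trans hScard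
  -- main estimate
  have hmain : ∑ k ∈ S₀, |u k| + (K : ℝ) * t ≤ phi K x := by
    have h1 : ∑ k ∈ S₀, |u k| = (∑ k ∈ S₀, |x k|) - S₀.card * t := by
      have he : ∑ k ∈ S₀, |u k| = ∑ k ∈ S₀, (|x k| - t) :=
        Finset.sum_congr rfl fun k hk => huabs k ((hS₀mem k).mpr hk)
      rw [he, Finset.sum_sub_distrib, Finset.sum_const, nsmul_eq_mul]
    have h2 : ∑ k ∈ S₀, |x k| ≤ phi S₀.card x := sum_abs_le_phi hx S₀
    have hsplit : phi K x = phi S₀.card x + ∑ n ∈ Finset.Ico S₀.card K, rearr x n := by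
      rw [phi, phi, Finset.range_eq_Ico, Finset.range_eq_Ico]
      exact (Finset.sum_Ico_consecutive _ (Nat.zero_le _) hS₀card).symm
    have hlow : ((K - S₀.card : ℕ) : ℝ) * t ≤ ∑ n ∈ Finset.Ico S₀.card K, rearr x n := by
      have := Finset.card_nsmul_le_sum (Finset.Ico S₀.card K) (fun n => rearr x n) t
        (fun n hn => rearr_anti x (le_of_lt (Finset.mem_Ico.mp hn).2))
      simpa [Nat.card_Ico, nsmul_eq_mul] using this
    have hcast : ((K - S₀.card : ℕ) : ℝ) = (K : ℝ) - (S₀.card : ℝ) := by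
      push_cast [hS₀card]; ring
    rw [h1, hsplit]
    rw [hcast] at hlow
    linarith
  have hv : supNorm v ≤ t := supNorm_le hvabs
  refine ⟨u, v, ?_, ⟨S₀, huzero'⟩, hsummable, ⟨t, hvabs⟩, ?_⟩
  · funext k; simp [hudef]
  · rw [htsum]
    have : (K : ℝ) * supNorm v ≤ (K : ℝ) * t :=
      mul_le_mul_of_nonneg_left hv (Nat.cast_nonneg K)
    linarith

end Aux14
namespace Aux14

lemma isBdd_of_summable {u : ℕ → ℝ} (hu : Summable (fun n => |u n|)) : IsBdd u :=
  ⟨∑' n, |u n|, fun k => Summable.le_tsum hu k (fun _ _ => abs_nonneg _)⟩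

lemma phi_u_le {u : ℕ → ℝ} (hu : Summable (fun n => |u n|)) (K : ℕ) :
    phi K u ≤ ∑' n, |u n| := by
  have htsum0 : 0 ≤ ∑' n, |u n| := tsum_nonneg fun n => abs_nonneg _
  rcases Nat.eq_zero_or_pos K with rfl | hK
  · simpa [phi] using htsum0
  refine le_of_forall_pos_le_add ?_
  intro ε hε
  set δ := ε / K with hδdef
  have hδ : 0 < δ := div_pos hε (by positivity)
  have greedy : ∀ m : ℕ, ∃ F : Finset ℕ, F.card = m ∧
      ∑ n ∈ Finset.range m, rearr u n ≤ ∑ k ∈ F, |u k| + m * δ := by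
    intro m
    induction m with
    | zero => exact ⟨∅, by simp, by simp⟩
    | succ m ih =>
      obtain ⟨F, hFc, hFs⟩ := ih
      have h1 : rearr u m ≤ ⨆ k : {k : ℕ // k ∉ F}, |u k.1| := rearr_le (le_of_eq hFc)
      have h2 : ∃ k : {k : ℕ // k ∉ F}, (⨆ k : {k : ℕ // k ∉ F}, |u k.1|) - δ < |u k.1| := by
        apply exists_lt_of_lt_ciSup
        linarith [hδ]
      obtain ⟨⟨k, hkF⟩, hk⟩ := h2
      refine ⟨insert k F, by rw [Finset.card_insert_of_notMem hkF, hFc], ?_⟩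
      rw [Finset.sum_range_succ, Finset.sum_insert hkF]
      have : rearr u m ≤ |u k| + δ := by linarith
      push_cast
      linarith
  obtain ⟨F, hFc, hFs⟩ := greedy K
  have hsum : ∑ k ∈ F, |u k| ≤ ∑' n, |u n| := Summable.sum_le_tsum F (fun _ _ => abs_nonneg _) hu
  have : (K : ℝ) * δ = ε := by
    rw [hδdef]; field_simp
  rw [phi]
  linarith

/-- L1 : any decomposition bounds the K-functional. -/
lemma phi_le {u v : ℕ → ℝ} (hu : Summable (fun n => |u n|)) (hv : IsBdd v) (K : ℕ) :
    phi K (u + v) ≤ (∑' n, |u n|) + K * supNorm v := by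
  have hbu : IsBdd u := isBdd_of_summable hu
  have hr : ∀ n, rearr (u + v) n ≤ rearr u n + supNorm v := by
    intro n
    refine rearr_le_add hbu (supNorm_nonneg v) (fun k => ?_) n
    calc |(u + v) k| ≤ |u k| + |v k| := abs_add_le _ _
      _ ≤ |u k| + supNorm v := by linarith [abs_le_supNorm hv k]
  calc phi K (u + v) ≤ ∑ n ∈ Finset.range K, (rearr u n + supNorm v) :=
        Finset.sum_le_sum fun n _ => hr n
    _ = phi K u + K * supNorm v := by
        rw [Finset.sum_add_distrib, Finset.sum_const, Finset.card_range, nsmul_eq_mul]; rfl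
    _ ≤ (∑' n, |u n|) + K * supNorm v := by linarith [phi_u_le hu K]

lemma isBdd_add {a b : ℕ → ℝ} (ha : IsBdd a) (hb : IsBdd b) : IsBdd (a + b) := by
  obtain ⟨C, hC⟩ := ha; obtain ⟨D, hD⟩ := hb
  exact ⟨C + D, fun n => (abs_add_le _ _).trans (add_le_add (hC n) (hD n))⟩

lemma supNorm_add_le {a b : ℕ → ℝ} (ha : IsBdd a) (hb : IsBdd b) :
    supNorm (a + b) ≤ supNorm a + supNorm b :=
  supNorm_le fun n => (abs_add_le _ _).trans (add_le_add (abs_le_supNorm ha n) (abs_le_supNorm hb n))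

lemma phi_add_le {a b : ℕ → ℝ} (ha : IsBdd a) (hb : IsBdd b) (K : ℕ) :
    phi K (a + b) ≤ phi K a + phi K b := by
  obtain ⟨ua, va, haeq, _, hsa, hva, hba⟩ := exists_decomp ha K
  obtain ⟨ub, vb, hbeq, _, hsb, hvb, hbb⟩ := exists_decomp hb K
  have heq : a + b = (ua + ub) + (va + vb) := by rw [haeq, hbeq]; abel
  have hsum : Summable (fun n => |(ua + ub) n|) := by
    apply Summable.of_nonneg_of_le (fun n => abs_nonneg _) (fun n => abs_add_le (ua n) (ub n))
    exact hsa.add hsb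
  have htsum : ∑' n, |(ua + ub) n| ≤ (∑' n, |ua n|) + ∑' n, |ub n| := by
    calc ∑' n, |(ua + ub) n| ≤ ∑' n, (|ua n| + |ub n|) :=
          Summable.tsum_le_tsum (fun n => abs_add_le _ _) hsum (hsa.add hsb)
      _ = (∑' n, |ua n|) + ∑' n, |ub n| := Summable.tsum_add hsa hsb
  have hsup : supNorm (va + vb) ≤ supNorm va + supNorm vb := supNorm_add_le hva hvb
  calc phi K (a + b) = phi K ((ua + ub) + (va + vb)) := by rw [← heq]
    _ ≤ (∑' n, |(ua + ub) n|) + K * supNorm (va + vb) := phi_le hsum (isBdd_add hva hvb) K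
    _ ≤ ((∑' n, |ua n|) + K * supNorm va) + ((∑' n, |ub n|) + K * supNorm vb) := by
        have hK : (0:ℝ) ≤ K := Nat.cast_nonneg K
        nlinarith
    _ ≤ phi K a + phi K b := add_le_add hba hbb

lemma supNorm_of_not_bdd {v : ℕ → ℝ} (h : ¬ IsBdd v) : supNorm v = 0 := by
  refine Real.iSup_of_not_bddAbove (fun hb => h ?_)
  obtain ⟨C, hC⟩ := hb
  exact ⟨C, fun n => hC ⟨n, rfl⟩⟩

lemma supNorm_smul_le (c : ℝ) (v : ℕ → ℝ) : supNorm (c • v) ≤ |c| * supNorm v := by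
  rcases eq_or_ne c 0 with rfl | hc
  · have : (0 : ℝ) • v = (fun _ => (0:ℝ)) := by funext n; simp
    rw [this]
    have h0 : supNorm (fun _ => (0:ℝ)) = 0 := by
      simp [supNorm]
    rw [h0]; simp
  by_cases hv : IsBdd v
  · refine supNorm_le fun n => ?_
    rw [Pi.smul_apply, smul_eq_mul, abs_mul]
    exact mul_le_mul_of_nonneg_left (abs_le_supNorm hv n) (abs_nonneg c)
  · have hcv : ¬ IsBdd (c • v) := by
      intro hb
      apply hv
      obtain ⟨C, hC⟩ := hb
      refine ⟨|c|⁻¹ * C, fun n => ?_⟩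
      have := hC n
      rw [Pi.smul_apply, smul_eq_mul, abs_mul] at this
      have hpos : (0:ℝ) < |c| := by positivity
      rw [← mul_le_mul_iff_right₀ hpos]
      calc |c| * |v n| ≤ C := this
        _ = |c| * (|c|⁻¹ * C) := by field_simp
    rw [supNorm_of_not_bdd hcv, supNorm_of_not_bdd hv]
    simp

lemma isBdd_smul {c : ℝ} {v : ℕ → ℝ} (hv : IsBdd v) : IsBdd (c • v) := by
  obtain ⟨C, hC⟩ := hv
  exact ⟨|c| * C, fun n => by
    rw [Pi.smul_apply, smul_eq_mul, abs_mul]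
    exact mul_le_mul_of_nonneg_left (hC n) (abs_nonneg c)⟩

lemma phi_smul_le (c : ℝ) {a : ℕ → ℝ} (ha : IsBdd a) (K : ℕ) :
    phi K (c • a) ≤ |c| * phi K a := by
  obtain ⟨u, v, heq, _, hs, hv, hb⟩ := exists_decomp ha K
  have heq2 : c • a = c • u + c • v := by rw [heq]; module
  have hsum : Summable (fun n => |(c • u) n|) := by
    have : (fun n => |(c • u) n|) = fun n => |c| * |u n| := by
      funext n; rw [Pi.smul_apply, smul_eq_mul, abs_mul]
    rw [this]; exact hs.mul_left _
  have htsum : ∑' n, |(c • u) n| = |c| * ∑' n, |u n| := by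
    have : (fun n => |(c • u) n|) = fun n => |c| * |u n| := by
      funext n; rw [Pi.smul_apply, smul_eq_mul, abs_mul]
    rw [this, tsum_mul_left]
  calc phi K (c • a) = phi K (c • u + c • v) := by rw [← heq2]
    _ ≤ (∑' n, |(c • u) n|) + K * supNorm (c • v) := phi_le hsum (isBdd_smul hv) K
    _ ≤ |c| * (∑' n, |u n|) + K * (|c| * supNorm v) := by
        rw [htsum]
        have hK : (0:ℝ) ≤ K := Nat.cast_nonneg K
        have := supNorm_smul_le c v
        nlinarith
    _ = |c| * ((∑' n, |u n|) + K * supNorm v) := by ring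
    _ ≤ |c| * phi K a := mul_le_mul_of_nonneg_left hb (abs_nonneg c)

lemma phi_T_le {T : (ℕ → ℝ) →ₗ[ℝ] (ℕ → ℝ)} (hT : IsDS T) {y : ℕ → ℝ} (hy : IsBdd y) (K : ℕ) :
    phi K (T y) ≤ phi K y := by
  obtain ⟨u, v, heq, _, hs, hv, hb⟩ := exists_decomp hy K
  have heq2 : T y = T u + T v := by rw [heq, map_add]
  obtain ⟨hsu, htu⟩ := hT.1 u hs
  obtain ⟨hbv, hsv⟩ := hT.2 v hv
  calc phi K (T y) = phi K (T u + T v) := by rw [← heq2]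
    _ ≤ (∑' n, |T u n|) + K * supNorm (T v) := phi_le hsu hbv K
    _ ≤ (∑' n, |u n|) + K * supNorm v := by
        have hK : (0:ℝ) ≤ K := Nat.cast_nonneg K
        nlinarith
    _ ≤ phi K y := hb

end Aux14
namespace Aux14

variable {T : (ℕ → ℝ) →ₗ[ℝ] (ℕ → ℝ)}

lemma iter_bdd (hT : IsDS T) {x : ℕ → ℝ} (hx : IsBdd x) (k : ℕ) :
    IsBdd ((⇑T)^[k] x) ∧ supNorm ((⇑T)^[k] x) ≤ supNorm x := by
  induction k with
  | zero => exact ⟨hx, le_rfl⟩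
  | succ k ih =>
    rw [Function.iterate_succ_apply']
    obtain ⟨hb, hs⟩ := hT.2 _ ih.1
    exact ⟨hb, hs.trans ih.2⟩

lemma phi_iter_le (hT : IsDS T) {x : ℕ → ℝ} (hx : IsBdd x) (k K : ℕ) :
    phi K ((⇑T)^[k] x) ≤ phi K x := by
  induction k with
  | zero => exact le_rfl
  | succ k ih =>
    rw [Function.iterate_succ_apply']
    exact (phi_T_le hT (iter_bdd hT hx k).1 K).trans ih

lemma iter_sub (k : ℕ) (x y : ℕ → ℝ) : (⇑T)^[k] (x - y) = (⇑T)^[k] x - (⇑T)^[k] y := by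
  induction k with
  | zero => rfl
  | succ k ih => rw [Function.iterate_succ_apply', Function.iterate_succ_apply',
      Function.iterate_succ_apply', ih, map_sub]

lemma cesaro_sub (n : ℕ) (x y : ℕ → ℝ) (s : ℕ) :
    cesaro T n x s - cesaro T n y s = cesaro T n (x - y) s := by
  simp only [cesaro]
  rw [div_sub_div_same, ← Finset.sum_sub_distrib]
  congr 1
  refine Finset.sum_congr rfl fun k _ => ?_
  rw [iter_sub k x y, Pi.sub_apply]

lemma isBdd_sum_iter (hT : IsDS T) {x : ℕ → ℝ} (hx : IsBdd x) (n : ℕ) :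
    IsBdd (fun s => ∑ k ∈ Finset.range n, (⇑T)^[k] x s) := by
  obtain ⟨C, hC⟩ := id hx
  have hC0 : 0 ≤ C := (abs_nonneg _).trans (hC 0)
  refine ⟨n * C, fun s => ?_⟩
  calc |∑ k ∈ Finset.range n, (⇑T)^[k] x s| ≤ ∑ k ∈ Finset.range n, |(⇑T)^[k] x s| :=
        Finset.abs_sum_le_sum_abs _ _
    _ ≤ ∑ k ∈ Finset.range n, C := by
        refine Finset.sum_le_sum fun k _ => ?_
        have h1 := abs_le_supNorm (iter_bdd hT hx k).1 s
        have h2 := (iter_bdd hT hx k).2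
        have h3 : supNorm x ≤ C := supNorm_le hC
        linarith
    _ = n * C := by rw [Finset.sum_const, Finset.card_range, nsmul_eq_mul]

lemma cesaro_bdd (hT : IsDS T) {x : ℕ → ℝ} (hx : IsBdd x) (n : ℕ) :
    IsBdd (cesaro T n x) ∧ supNorm (cesaro T n x) ≤ supNorm x := by
  rcases Nat.eq_zero_or_pos n with rfl | hn
  · constructor
    · exact ⟨0, fun s => by simp [cesaro]⟩
    · refine (supNorm_le fun s => ?_).trans (le_rfl)
      · simp [cesaro]
        exact supNorm_nonneg x
  · have key : ∀ s, |cesaro T n x s| ≤ supNorm x := by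
      intro s
      rw [cesaro, abs_div, abs_of_nonneg (Nat.cast_nonneg n : (0:ℝ) ≤ n)]
      rw [div_le_iff₀ (by positivity : (0:ℝ) < n)]
      calc |∑ k ∈ Finset.range n, (⇑T)^[k] x s| ≤ ∑ k ∈ Finset.range n, |(⇑T)^[k] x s| :=
            Finset.abs_sum_le_sum_abs _ _
        _ ≤ ∑ k ∈ Finset.range n, supNorm x := by
            refine Finset.sum_le_sum fun k _ => ?_
            exact (abs_le_supNorm (iter_bdd hT hx k).1 s).trans (iter_bdd hT hx k).2
        _ = supNorm x * n := by rw [Finset.sum_const, Finset.card_range, nsmul_eq_mul]; ring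
    exact ⟨⟨supNorm x, key⟩, supNorm_le key⟩

lemma phi_sum_le (hT : IsDS T) {x : ℕ → ℝ} (hx : IsBdd x) (n K : ℕ) :
    phi K (fun s => ∑ k ∈ Finset.range n, (⇑T)^[k] x s) ≤ n * phi K x := by
  induction n with
  | zero => simp [phi_nonneg, rearr_zero, phi]
  | succ n ih =>
    have heq : (fun s => ∑ k ∈ Finset.range (n+1), (⇑T)^[k] x s) =
        (fun s => ∑ k ∈ Finset.range n, (⇑T)^[k] x s) + (⇑T)^[n] x := by
      funext s; rw [Pi.add_apply, Finset.sum_range_succ]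
    rw [heq]
    have h1 := phi_add_le (isBdd_sum_iter hT hx n) (iter_bdd hT hx n).1 K
    have h2 := phi_iter_le hT hx n K
    push_cast
    linarith

lemma phi_cesaro_le (hT : IsDS T) {x : ℕ → ℝ} (hx : IsBdd x) (n K : ℕ) :
    phi K (cesaro T n x) ≤ phi K x := by
  rcases Nat.eq_zero_or_pos n with rfl | hn
  · have : cesaro T 0 x = (fun _ => (0:ℝ)) := by funext s; simp [cesaro]
    rw [this]
    calc phi K (fun _ => (0:ℝ)) = 0 := by simp [phi, rearr_zero]
      _ ≤ phi K x := phi_nonneg K x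
  · have heq : cesaro T n x = ((n : ℝ)⁻¹) • (fun s => ∑ k ∈ Finset.range n, (⇑T)^[k] x s) := by
      funext s; rw [Pi.smul_apply, smul_eq_mul, cesaro, div_eq_inv_mul]
    rw [heq]
    calc phi K (((n : ℝ)⁻¹) • _) ≤ |(n : ℝ)⁻¹| * phi K (fun s => ∑ k ∈ Finset.range n, (⇑T)^[k] x s) :=
          phi_smul_le _ (isBdd_sum_iter hT hx n) K
      _ ≤ |(n : ℝ)⁻¹| * (n * phi K x) := by
          refine mul_le_mul_of_nonneg_left (phi_sum_le hT hx n K) (abs_nonneg _)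
      _ = phi K x := by
          rw [abs_of_nonneg (by positivity : (0:ℝ) ≤ (n:ℝ)⁻¹)]
          field_simp

end Aux14
namespace Aux14

variable {T : (ℕ → ℝ) →ₗ[ℝ] (ℕ → ℝ)}

noncomputable def ee (k : ℕ) : ℕ → ℝ := Pi.single k 1

lemma ee_summable (k : ℕ) : Summable (fun n => |ee k n|) :=
  summable_of_ne_finset_zero (s := {k}) (fun n hn => by
    simp only [ee, Pi.single_apply]
    rw [if_neg (by simpa using hn)]
    simp)

lemma ee_tsum (k : ℕ) : ∑' n, |ee k n| = 1 := by
  rw [tsum_eq_sum (s := {k}) (fun n hn => by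
    simp only [ee, Pi.single_apply]
    rw [if_neg (by simpa using hn)]
    simp)]
  simp [ee]

/-- Row bound: `∑_{k∈F} |T eₖ n| ≤ 1`. -/
lemma row_bound (hT : IsDS T) (n : ℕ) (F : Finset ℕ) :
    ∑ k ∈ F, |T (ee k) n| ≤ 1 := by
  set c : ℕ → ℝ := fun k => if 0 ≤ T (ee k) n then 1 else -1 with hcdef
  set g : ℕ → ℝ := fun j => if j ∈ F then c j else 0 with hgdef
  have hgeq : g = ∑ k ∈ F, c k • ee k := by
    funext j
    rw [Finset.sum_apply]
    simp only [Pi.smul_apply, smul_eq_mul, ee, Pi.single_apply]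
    by_cases hj : j ∈ F
    · rw [hgdef]
      simp only [if_pos hj]
      rw [Finset.sum_eq_single j (fun k _ hk => by rw [if_neg (Ne.symm hk)]; ring)
        (fun h => absurd hj h)]
      rw [if_pos rfl]; ring
    · rw [hgdef]
      simp only [if_neg hj]
      refine (Finset.sum_eq_zero fun k hk => ?_).symm
      rw [if_neg (fun h : j = k => hj (h ▸ hk))]; ring
  have hgbdd : IsBdd g := by
    refine ⟨1, fun j => ?_⟩
    rw [hgdef]
    by_cases hj : j ∈ F
    · simp only [if_pos hj, hcdef]
      by_cases h : 0 ≤ T (ee j) n <;> simp [h]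
    · simp [if_neg hj]
  have hgsup : supNorm g ≤ 1 := supNorm_le (by
    intro j
    rw [hgdef]
    by_cases hj : j ∈ F
    · simp only [if_pos hj, hcdef]
      by_cases h : 0 ≤ T (ee j) n <;> simp [h]
    · simp [if_neg hj])
  have hTg : T g n = ∑ k ∈ F, |T (ee k) n| := by
    rw [hgeq, map_sum]
    rw [Finset.sum_apply]
    refine Finset.sum_congr rfl fun k _ => ?_
    rw [map_smul, Pi.smul_apply, smul_eq_mul]
    show (if 0 ≤ T (ee k) n then (1:ℝ) else -1) * T (ee k) n = _
    by_cases h : 0 ≤ T (ee k) n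
    · rw [if_pos h, abs_of_nonneg h]; ring
    · rw [if_neg h, abs_of_neg (not_le.mp h)]; ring
  calc ∑ k ∈ F, |T (ee k) n| = T g n := hTg.symm
    _ ≤ |T g n| := le_abs_self _
    _ ≤ supNorm (T g) := abs_le_supNorm (hT.2 g hgbdd).1 n
    _ ≤ supNorm g := (hT.2 g hgbdd).2
    _ ≤ 1 := hgsup

/-- Column bound. -/
lemma col_bound (hT : IsDS T) (k : ℕ) (W : Finset ℕ) :
    ∑ n ∈ W, |T (ee k) n| ≤ 1 := by
  obtain ⟨hsum, htsum⟩ := hT.1 (ee k) (ee_summable k)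
  calc ∑ n ∈ W, |T (ee k) n| ≤ ∑' n, |T (ee k) n| :=
        Summable.sum_le_tsum W (fun _ _ => abs_nonneg _) hsum
    _ ≤ ∑' n, |ee k n| := htsum
    _ = 1 := ee_tsum k

/-- ℓ² bound for finitely supported sequences. -/
lemma sq_bound_finsupp (hT : IsDS T) {f : ℕ → ℝ} {F : Finset ℕ}
    (hf : ∀ k ∉ F, f k = 0) (W : Finset ℕ) :
    ∑ n ∈ W, (T f n)^2 ≤ ∑ k ∈ F, (f k)^2 := by
  have hfeq : f = ∑ k ∈ F, f k • ee k := by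
    funext j
    rw [Finset.sum_apply]
    simp only [Pi.smul_apply, smul_eq_mul, ee, Pi.single_apply]
    by_cases hj : j ∈ F
    · rw [Finset.sum_eq_single j (fun k _ hk => by rw [if_neg (Ne.symm hk)]; ring)
        (fun h => absurd hj h)]
      rw [if_pos rfl]; ring
    · rw [hf j hj]
      refine (Finset.sum_eq_zero fun k hk => ?_).symm
      rw [if_neg (fun h : j = k => hj (h ▸ hk))]; ring
  have hTf : ∀ n, T f n = ∑ k ∈ F, f k * T (ee k) n := by
    intro n
    conv_lhs => rw [hfeq]
    rw [map_sum, Finset.sum_apply]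
    refine Finset.sum_congr rfl fun k _ => ?_
    rw [map_smul, Pi.smul_apply, smul_eq_mul]
  have key : ∀ n, (T f n)^2 ≤ ∑ k ∈ F, |T (ee k) n| * (f k)^2 := by
    intro n
    have h1 : (T f n)^2 ≤ (∑ k ∈ F, |f k| * |T (ee k) n|)^2 := by
      rw [hTf n, ← sq_abs]
      refine pow_le_pow_left₀ (abs_nonneg _) ?_ 2
      refine (Finset.abs_sum_le_sum_abs _ _).trans ?_
      refine le_of_eq (Finset.sum_congr rfl fun k _ => ?_)
      rw [abs_mul]
    have h2 : (∑ k ∈ F, |f k| * |T (ee k) n|)^2 ≤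
        (∑ k ∈ F, Real.sqrt (|T (ee k) n|) ^ 2) * ∑ k ∈ F, (Real.sqrt (|T (ee k) n|) * |f k|) ^ 2 := by
      have := Finset.sum_mul_sq_le_sq_mul_sq F (fun k => Real.sqrt (|T (ee k) n|))
        (fun k => Real.sqrt (|T (ee k) n|) * |f k|)
      calc (∑ k ∈ F, |f k| * |T (ee k) n|)^2
          = (∑ k ∈ F, Real.sqrt (|T (ee k) n|) * (Real.sqrt (|T (ee k) n|) * |f k|))^2 := by
            congr 1
            refine Finset.sum_congr rfl fun k _ => ?_
            rw [← mul_assoc, Real.mul_self_sqrt (abs_nonneg _)]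
            ring
        _ ≤ _ := this
    have h3 : (∑ k ∈ F, Real.sqrt (|T (ee k) n|) ^ 2) ≤ 1 := by
      refine le_trans (le_of_eq (Finset.sum_congr rfl fun k _ =>
        Real.sq_sqrt (abs_nonneg _))) (row_bound hT n F)
    have h4 : ∑ k ∈ F, (Real.sqrt (|T (ee k) n|) * |f k|) ^ 2 =
        ∑ k ∈ F, |T (ee k) n| * (f k)^2 := by
      refine Finset.sum_congr rfl fun k _ => ?_
      rw [mul_pow, Real.sq_sqrt (abs_nonneg _), sq_abs]
    have h5 : 0 ≤ ∑ k ∈ F, (Real.sqrt (|T (ee k) n|) * |f k|) ^ 2 :=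
      Finset.sum_nonneg fun k _ => sq_nonneg _
    calc (T f n)^2 ≤ (∑ k ∈ F, Real.sqrt (|T (ee k) n|) ^ 2) *
          ∑ k ∈ F, (Real.sqrt (|T (ee k) n|) * |f k|) ^ 2 := h1.trans h2
      _ ≤ 1 * ∑ k ∈ F, (Real.sqrt (|T (ee k) n|) * |f k|) ^ 2 :=
          mul_le_mul_of_nonneg_right h3 h5
      _ = ∑ k ∈ F, |T (ee k) n| * (f k)^2 := by rw [one_mul, h4]
  calc ∑ n ∈ W, (T f n)^2 ≤ ∑ n ∈ W, ∑ k ∈ F, |T (ee k) n| * (f k)^2 :=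
        Finset.sum_le_sum fun n _ => key n
    _ = ∑ k ∈ F, (f k)^2 * ∑ n ∈ W, |T (ee k) n| := by
        rw [Finset.sum_comm]
        refine Finset.sum_congr rfl fun k _ => ?_
        rw [Finset.mul_sum]
        refine Finset.sum_congr rfl fun n _ => by ring
    _ ≤ ∑ k ∈ F, (f k)^2 * 1 :=
        Finset.sum_le_sum fun k _ => mul_le_mul_of_nonneg_left (col_bound hT k W) (sq_nonneg _)
    _ = ∑ k ∈ F, (f k)^2 := by simp

end Aux14
namespace Aux14

variable {T : (ℕ → ℝ) →ₗ[ℝ] (ℕ → ℝ)}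

lemma isBdd_of_sq_summable {f : ℕ → ℝ} (hf : Summable (fun n => (f n)^2)) : IsBdd f :=
  ⟨Real.sqrt (∑' n, (f n)^2), fun k => by
    rw [← Real.sqrt_sq_eq_abs]
    exact Real.sqrt_le_sqrt (Summable.le_tsum hf k fun _ _ => sq_nonneg _)⟩

lemma sq_bound (hT : IsDS T) {f : ℕ → ℝ} (hf : Summable (fun n => (f n)^2)) :
    Summable (fun n => (T f n)^2) ∧ ∑' n, (T f n)^2 ≤ ∑' n, (f n)^2 := by
  have habs : Tendsto (fun k => |f k|) atTop (𝓝 0) := by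
    have h1 : Tendsto (fun k => (f k)^2) atTop (𝓝 0) := hf.tendsto_atTop_zero
    have h2 : Tendsto (fun k => Real.sqrt ((f k)^2)) atTop (𝓝 (Real.sqrt 0)) :=
      (Real.continuous_sqrt.tendsto 0).comp h1
    simpa [Real.sqrt_sq_eq_abs] using h2
  have hbdd : IsBdd f := isBdd_of_sq_summable hf
  set tr : ℕ → (ℕ → ℝ) := fun M k => if k < M then f k else 0 with htr
  have htr0 : ∀ M : ℕ, ∀ k ∉ Finset.range M, tr M k = 0 := by
    intro M k hk
    have : ¬ k < M := by simpa using hk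
    simp only [htr, if_neg this]
  have hdiffbdd : ∀ M, IsBdd (f - tr M) := by
    intro M
    obtain ⟨C, hC⟩ := hbdd
    refine ⟨C, fun k => ?_⟩
    simp only [Pi.sub_apply, htr]
    by_cases hk : k < M
    · simp only [if_pos hk, sub_self, abs_zero]
      exact (abs_nonneg _).trans (hC 0)
    · simp only [if_neg hk, sub_zero]
      exact hC k
  have hdiffle : ∀ δ : ℝ, 0 < δ → ∃ M₀ : ℕ, ∀ M ≥ M₀, supNorm (f - tr M) ≤ δ := by
    intro δ hδ
    have := (Metric.tendsto_atTop.mp habs) δ hδ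
    obtain ⟨M₀, hM₀⟩ := this
    refine ⟨M₀, fun M hM => supNorm_le fun k => ?_⟩
    simp only [Pi.sub_apply, htr]
    by_cases hk : k < M
    · simp [if_pos hk]; linarith
    · simp only [if_neg hk, sub_zero]
      have : M₀ ≤ k := le_trans hM (not_lt.mp hk)
      have := hM₀ k this
      rw [Real.dist_eq, sub_zero, abs_abs] at this
      linarith
  have hpt : ∀ n, Tendsto (fun M => T (tr M) n) atTop (𝓝 (T f n)) := by
    intro n
    rw [Metric.tendsto_atTop]
    intro ε hε
    obtain ⟨M₀, hM₀⟩ := hdiffle (ε/2) (by linarith)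
    refine ⟨M₀, fun M hM => ?_⟩
    have heq : T f n - T (tr M) n = T (f - tr M) n := by rw [map_sub]; rfl
    have h1 : |T f n - T (tr M) n| ≤ ε/2 := by
      rw [heq]
      exact (abs_le_supNorm (hT.2 _ (hdiffbdd M)).1 n).trans
        ((hT.2 _ (hdiffbdd M)).2.trans (hM₀ M hM))
    rw [Real.dist_eq]
    rw [abs_sub_comm]
    linarith
  have hW : ∀ W : Finset ℕ, ∑ n ∈ W, (T f n)^2 ≤ ∑' n, (f n)^2 := by
    intro W
    have hlim : Tendsto (fun M => ∑ n ∈ W, (T (tr M) n)^2) atTop (𝓝 (∑ n ∈ W, (T f n)^2)) :=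
      tendsto_finset_sum W (fun n _ => ((hpt n).pow 2))
    refine le_of_tendsto hlim (Eventually.of_forall fun M => ?_)
    calc ∑ n ∈ W, (T (tr M) n)^2 ≤ ∑ k ∈ Finset.range M, (tr M k)^2 :=
          sq_bound_finsupp hT (htr0 M) W
      _ = ∑ k ∈ Finset.range M, (f k)^2 := by
          refine Finset.sum_congr rfl fun k hk => ?_
          simp only [htr, if_pos (Finset.mem_range.mp hk)]
      _ ≤ ∑' n, (f n)^2 := Summable.sum_le_tsum _ (fun _ _ => sq_nonneg _) hf
  have hsummable : Summable (fun n => (T f n)^2) :=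
    summable_of_sum_le (fun n => sq_nonneg _) hW
  exact ⟨hsummable, Summable.tsum_le_of_sum_le hsummable hW⟩

end Aux14
namespace Aux14

variable {T : (ℕ → ℝ) →ₗ[ℝ] (ℕ → ℝ)}

lemma two_toReal : ((2:ENNReal)).toReal = 2 := by norm_num

lemma memℓ2_iff {f : ℕ → ℝ} : Memℓp f 2 ↔ Summable (fun n => (f n)^2) := by
  rw [memℓp_gen_iff (by rw [two_toReal]; norm_num)]
  constructor
  · intro h
    have : (fun n => (f n)^2) = fun n => ‖f n‖ ^ ((2:ENNReal)).toReal := by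
      funext n
      rw [two_toReal, Real.norm_eq_abs, Real.rpow_two, sq_abs]
    rw [this]; exact h
  · intro h
    have : (fun n => ‖f n‖ ^ ((2:ENNReal)).toReal) = fun n => (f n)^2 := by
      funext n
      rw [two_toReal, Real.norm_eq_abs, Real.rpow_two, sq_abs]
    rw [this]; exact h

lemma norm_sq_eq (f : lp (fun _ : ℕ => ℝ) 2) : ‖f‖^2 = ∑' n, ((f : ℕ → ℝ) n)^2 := by
  have := lp.norm_rpow_eq_tsum (by rw [two_toReal]; norm_num) f
  rw [two_toReal] at this
  rw [← Real.rpow_two, this]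
  refine tsum_congr fun n => ?_
  rw [Real.norm_eq_abs, Real.rpow_two, sq_abs]

/-- The ℓ² restriction of a Dunford–Schwartz operator. -/
noncomputable def DSop (T : (ℕ → ℝ) →ₗ[ℝ] (ℕ → ℝ)) (hT : IsDS T) :
    lp (fun _ : ℕ => ℝ) 2 →L[ℝ] lp (fun _ : ℕ => ℝ) 2 :=
  LinearMap.mkContinuous
    { toFun := fun f => ⟨T f, memℓ2_iff.mpr (sq_bound hT (memℓ2_iff.mp f.2)).1⟩
      map_add' := fun f g => by
        apply Subtype.ext
        have : ((f + g : lp (fun _ : ℕ => ℝ) 2) : ℕ → ℝ) = (f : ℕ → ℝ) + (g : ℕ → ℝ) :=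
          lp.coeFn_add f g
        simp only []
        rw [this, map_add]
        rfl
      map_smul' := fun c f => by
        apply Subtype.ext
        have : ((c • f : lp (fun _ : ℕ => ℝ) 2) : ℕ → ℝ) = c • (f : ℕ → ℝ) :=
          lp.coeFn_smul c f
        simp only [RingHom.id_apply]
        rw [this, map_smul]
        rfl }
    1
    (fun f => by
      simp only [LinearMap.coe_mk, AddHom.coe_mk, one_mul]
      have h1 : ‖(⟨T f, memℓ2_iff.mpr (sq_bound hT (memℓ2_iff.mp f.2)).1⟩ :
          lp (fun _ : ℕ => ℝ) 2)‖^2 ≤ ‖f‖^2 := by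
        rw [norm_sq_eq, norm_sq_eq]
        exact (sq_bound hT (memℓ2_iff.mp f.2)).2
      have h2 := Real.sqrt_le_sqrt h1
      rwa [Real.sqrt_sq (norm_nonneg _), Real.sqrt_sq (norm_nonneg _)] at h2)

lemma DSop_norm_le (hT : IsDS T) : ‖DSop T hT‖ ≤ 1 :=
  LinearMap.mkContinuous_norm_le _ zero_le_one _

lemma DSop_coe (hT : IsDS T) (f : lp (fun _ : ℕ => ℝ) 2) :
    ((DSop T hT f : lp (fun _ : ℕ => ℝ) 2) : ℕ → ℝ) = T (f : ℕ → ℝ) := rfl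

lemma DSop_iter_coe (hT : IsDS T) (k : ℕ) (f : lp (fun _ : ℕ => ℝ) 2) :
    (((⇑(DSop T hT))^[k] f : lp (fun _ : ℕ => ℝ) 2) : ℕ → ℝ) = (⇑T)^[k] (f : ℕ → ℝ) := by
  induction k with
  | zero => rfl
  | succ k ih =>
    rw [Function.iterate_succ_apply', Function.iterate_succ_apply', DSop_coe, ih]

/-- Uniform convergence of Cesàro averages for finitely supported sequences. -/
lemma cesaro_conv_finsupp (hT : IsDS T) {y : ℕ → ℝ} {F : Finset ℕ}
    (hy : ∀ k ∉ F, y k = 0) :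
    ∃ L : ℕ → ℝ, IsBdd L ∧
      Tendsto (fun n => supNorm (fun s => cesaro T n y s - L s)) atTop (𝓝 0) := by
  have hy2 : Summable (fun n => (y n)^2) :=
    summable_of_ne_finset_zero (s := F) (fun k hk => by rw [hy k hk]; ring)
  set f₀ : lp (fun _ : ℕ => ℝ) 2 := ⟨y, memℓ2_iff.mpr hy2⟩ with hf₀
  set S := DSop T hT with hS
  set P : lp (fun _ : ℕ => ℝ) 2 :=
    ↑(Submodule.orthogonalProjectionOnto ((S : lp (fun _ : ℕ => ℝ) 2 →L[ℝ] _).eqLocus (1 : lp (fun _ : ℕ => ℝ) 2 →L[ℝ] lp (fun _ : ℕ => ℝ) 2)) f₀) with hP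
  have hmet : Tendsto (fun n => birkhoffAverage ℝ (⇑S) _root_.id n f₀) atTop (𝓝 P) :=
    S.tendsto_birkhoffAverage_orthogonalProjection (DSop_norm_le hT) f₀
  set L : ℕ → ℝ := (P : ℕ → ℝ) with hL
  have hLbdd : IsBdd L := ⟨‖P‖, fun s => by
    have := lp.norm_apply_le_norm (by norm_num : (2:ENNReal) ≠ 0) P s
    simpa [Real.norm_eq_abs] using this⟩
  refine ⟨L, hLbdd, ?_⟩
  have hcoe : ∀ n s, cesaro T n y s = ((birkhoffAverage ℝ (⇑S) _root_.id n f₀ : lp _ 2) : ℕ → ℝ) s := by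
    intro n s
    rw [birkhoffAverage, birkhoffSum]
    have h1 : (∑ k ∈ Finset.range n, _root_.id ((⇑S)^[k] f₀)) = ∑ k ∈ Finset.range n, (⇑S)^[k] f₀ := rfl
    rw [h1]
    have h2 : (((n:ℝ)⁻¹ • ∑ k ∈ Finset.range n, (⇑S)^[k] f₀ : lp _ 2) : ℕ → ℝ) s =
        (n:ℝ)⁻¹ * ((∑ k ∈ Finset.range n, (⇑S)^[k] f₀ : lp _ 2) : ℕ → ℝ) s := by
      rw [lp.coeFn_smul]; rfl
    rw [h2, lp.coeFn_sum]
    have h3 : (∑ k ∈ Finset.range n, ((((⇑S)^[k] f₀) : lp _ 2) : ℕ → ℝ)) s =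
        ∑ k ∈ Finset.range n, (⇑T)^[k] y s := by
      rw [Finset.sum_apply]
      refine Finset.sum_congr rfl fun k _ => ?_
      rw [DSop_iter_coe hT k f₀]
    rw [h3, cesaro, div_eq_inv_mul]
  have hbound : ∀ n, supNorm (fun s => cesaro T n y s - L s) ≤
      ‖birkhoffAverage ℝ (⇑S) _root_.id n f₀ - P‖ := by
    intro n
    refine supNorm_le fun s => ?_
    rw [hcoe n s]
    have := lp.norm_apply_le_norm (by norm_num : (2:ENNReal) ≠ 0)
      (birkhoffAverage ℝ (⇑S) _root_.id n f₀ - P) s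
    rw [lp.coeFn_sub] at this
    simpa [Real.norm_eq_abs] using this
  refine squeeze_zero (fun n => supNorm_nonneg _) hbound ?_
  exact tendsto_iff_norm_sub_tendsto_zero.mp hmet

end Aux14
namespace Aux14

variable {T : (ℕ → ℝ) →ₗ[ℝ] (ℕ → ℝ)}

lemma isBdd_sub {a b : ℕ → ℝ} (ha : IsBdd a) (hb : IsBdd b) : IsBdd (fun s => a s - b s) := by
  obtain ⟨C, hC⟩ := ha; obtain ⟨D, hD⟩ := hb
  exact ⟨C + D, fun s => (abs_sub _ _).trans (add_le_add (hC s) (hD s))⟩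

lemma main_conv (hT : IsDS T) {x : ℕ → ℝ} (hx : IsBdd x)
    (hx0 : Tendsto x atTop (𝓝 0)) :
    ∃ x' : ℕ → ℝ, IsBdd x' ∧ (∀ K, phi K x' ≤ phi K x) ∧
      Tendsto (fun n => supNorm (fun s => cesaro T n x s - x' s)) atTop (𝓝 0) := by
  -- Step 1 : uniform Cauchy property
  have hC : ∀ ε : ℝ, 0 < ε → ∃ K : ℕ, ∀ m ≥ K, ∀ n ≥ K, ∀ s,
      |cesaro T m x s - cesaro T n x s| ≤ ε := by
    intro ε hε
    obtain ⟨M, hM⟩ := Metric.tendsto_atTop.mp hx0 (ε/4) (by linarith)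
    set y : ℕ → ℝ := fun k => if k < M then x k else 0 with hy
    have hy0 : ∀ k ∉ Finset.range M, y k = 0 := by
      intro k hk
      have : ¬ k < M := by simpa using hk
      simp [hy, if_neg this]
    have hxy : ∀ k, |x k - y k| ≤ ε/4 := by
      intro k
      simp only [hy]
      by_cases hk : k < M
      · simp [if_pos hk]; linarith
      · simp only [if_neg hk, sub_zero]
        have := hM k (not_lt.mp hk)
        rw [Real.dist_eq, sub_zero] at this
        linarith
    have hxybdd : IsBdd (x - y) := ⟨ε/4, fun k => hxy k⟩
    have hxysup : supNorm (x - y) ≤ ε/4 := supNorm_le fun k => hxy k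
    have hybdd : IsBdd y := by
      obtain ⟨C, hCx⟩ := hx
      refine ⟨C, fun k => ?_⟩
      simp only [hy]
      by_cases hk : k < M
      · simp only [if_pos hk]; exact hCx k
      · simp only [if_neg hk, abs_zero]; exact (abs_nonneg _).trans (hCx 0)
    obtain ⟨L, hLbdd, hLconv⟩ := cesaro_conv_finsupp hT hy0
    obtain ⟨K, hK⟩ := Metric.tendsto_atTop.mp hLconv (ε/4) (by linarith)
    have hKs : ∀ n ≥ K, ∀ s, |cesaro T n y s - L s| ≤ ε/4 := by
      intro n hn s
      have h1 := hK n hn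
      rw [Real.dist_eq, sub_zero] at h1
      have h2 : supNorm (fun s => cesaro T n y s - L s) < ε/4 := by
        calc supNorm (fun s => cesaro T n y s - L s)
            ≤ |supNorm (fun s => cesaro T n y s - L s)| := le_abs_self _
          _ < ε/4 := h1
      exact le_of_lt (lt_of_le_of_lt
        (abs_le_supNorm (isBdd_sub (cesaro_bdd hT hybdd n).1 hLbdd) s) h2)
    have hdiff : ∀ n ≥ K, ∀ s, |cesaro T n x s - cesaro T n y s| ≤ ε/4 := by
      intro n _ s
      rw [cesaro_sub]
      exact (abs_le_supNorm (cesaro_bdd hT hxybdd n).1 s).trans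
        ((cesaro_bdd hT hxybdd n).2.trans hxysup)
    refine ⟨K, fun m hm n hn s => ?_⟩
    have h1 := hdiff m hm s
    have h2 := hKs m hm s
    have h3 := hKs n hn s
    have h4 := hdiff n hn s
    calc |cesaro T m x s - cesaro T n x s|
        = |(cesaro T m x s - cesaro T m y s) + (cesaro T m y s - L s)
            + (L s - cesaro T n y s) + (cesaro T n y s - cesaro T n x s)| := by ring_nf
      _ ≤ _ := by
          have := abs_add_le (cesaro T m x s - cesaro T m y s + (cesaro T m y s - L s)
            + (L s - cesaro T n y s)) (cesaro T n y s - cesaro T n x s)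
          have h5 := abs_add_le (cesaro T m x s - cesaro T m y s + (cesaro T m y s - L s))
            (L s - cesaro T n y s)
          have h6 := abs_add_le (cesaro T m x s - cesaro T m y s) (cesaro T m y s - L s)
          have h7 : |L s - cesaro T n y s| ≤ ε/4 := by rw [abs_sub_comm]; exact h3
          have h8 : |cesaro T n y s - cesaro T n x s| ≤ ε/4 := by rw [abs_sub_comm]; exact h4
          calc |cesaro T m x s - cesaro T m y s + (cesaro T m y s - L s)
              + (L s - cesaro T n y s) + (cesaro T n y s - cesaro T n x s)| ≤ ε := by
                linarith
      _ = ε := rfl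
  -- Step 2 : pointwise limits
  have hptC : ∀ s, ∃ l : ℝ, Tendsto (fun n => cesaro T n x s) atTop (𝓝 l) := by
    intro s
    refine cauchySeq_tendsto_of_complete ?_
    rw [Metric.cauchySeq_iff]
    intro ε hε
    obtain ⟨K, hK⟩ := hC (ε/2) (by linarith)
    refine ⟨K, fun m hm n hn => ?_⟩
    rw [Real.dist_eq]
    calc |cesaro T m x s - cesaro T n x s| ≤ ε/2 := hK m hm n hn s
      _ < ε := by linarith
  choose x' hx' using hptC
  -- Step 3 : uniform convergence
  have hconv : ∀ ε : ℝ, 0 < ε → ∃ K : ℕ, ∀ n ≥ K, ∀ s, |cesaro T n x s - x' s| ≤ ε := by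
    intro ε hε
    obtain ⟨K, hK⟩ := hC ε hε
    refine ⟨K, fun n hn s => ?_⟩
    have h1 : Tendsto (fun m => |cesaro T n x s - cesaro T m x s|) atTop
        (𝓝 |cesaro T n x s - x' s|) := (tendsto_const_nhds.sub (hx' s)).abs
    refine le_of_tendsto h1 ?_
    filter_upwards [eventually_ge_atTop K] with m hm
    exact hK n hn m hm s
  -- Step 4 : supNorm convergence
  have hsupconv : Tendsto (fun n => supNorm (fun s => cesaro T n x s - x' s)) atTop (𝓝 0) := by
    rw [Metric.tendsto_atTop]
    intro ε hε
    obtain ⟨K, hK⟩ := hconv (ε/2) (by linarith)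
    refine ⟨K, fun n hn => ?_⟩
    rw [Real.dist_eq, sub_zero]
    have h1 : supNorm (fun s => cesaro T n x s - x' s) ≤ ε/2 :=
      supNorm_le fun s => hK n hn s
    have h2 : 0 ≤ supNorm (fun s => cesaro T n x s - x' s) := supNorm_nonneg _
    rw [abs_of_nonneg h2]
    linarith
  -- Step 5 : x' is bounded
  have hx'bdd : IsBdd x' := by
    obtain ⟨K, hK⟩ := hconv 1 one_pos
    refine ⟨supNorm x + 1, fun s => ?_⟩
    have h1 := hK K le_rfl s
    have h2 : |cesaro T K x s| ≤ supNorm x :=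
      (abs_le_supNorm (cesaro_bdd hT hx K).1 s).trans (cesaro_bdd hT hx K).2
    calc |x' s| = |cesaro T K x s - (cesaro T K x s - x' s)| := by ring_nf
      _ ≤ |cesaro T K x s| + |cesaro T K x s - x' s| := abs_sub _ _
      _ ≤ supNorm x + 1 := add_le_add h2 h1
  -- Step 6 : phi bounds
  have hphi : ∀ K, phi K x' ≤ phi K x := by
    intro K
    refine le_of_forall_pos_le_add fun ε hε => ?_
    set δ := ε / (K + 1) with hδdef
    have hδ : 0 < δ := by positivity
    obtain ⟨m, hm⟩ := hconv δ hδ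
    have hr : ∀ j, rearr x' j ≤ rearr (cesaro T m x) j + δ := by
      intro j
      refine rearr_le_add (cesaro_bdd hT hx m).1 (le_of_lt hδ) (fun s => ?_) j
      have h1 := hm m le_rfl s
      calc |x' s| = |cesaro T m x s - (cesaro T m x s - x' s)| := by ring_nf
        _ ≤ |cesaro T m x s| + |cesaro T m x s - x' s| := abs_sub _ _
        _ ≤ |cesaro T m x s| + δ := by linarith
    calc phi K x' ≤ ∑ j ∈ Finset.range K, (rearr (cesaro T m x) j + δ) :=
          Finset.sum_le_sum fun j _ => hr j
      _ = phi K (cesaro T m x) + K * δ := by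
          rw [Finset.sum_add_distrib, Finset.sum_const, Finset.card_range, nsmul_eq_mul]; rfl
      _ ≤ phi K x + K * δ := by linarith [phi_cesaro_le hT hx m K]
      _ ≤ phi K x + ε := by
          have : (K : ℝ) * δ ≤ ε := by
            rw [hδdef]
            have h0 : (0:ℝ) ≤ ε / (K+1) := by positivity
            have hle : (K:ℝ) * (ε / (K+1)) ≤ ((K:ℝ)+1) * (ε / (K+1)) := by nlinarith
            have heq : ((K:ℝ)+1) * (ε / (K+1)) = ε := by field_simp
            linarith
          linarith
  exact ⟨x', hx'bdd, hphi, hsupconv⟩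

end Aux14
namespace Aux14

/-- The forward shift operator. -/
def Tsh : (ℕ → ℝ) →ₗ[ℝ] (ℕ → ℝ) where
  toFun x := fun n => if n = 0 then 0 else x (n-1)
  map_add' x y := by funext n; by_cases h : n = 0 <;> simp [h]
  map_smul' c x := by funext n; by_cases h : n = 0 <;> simp [h]

lemma Tsh_apply (x : ℕ → ℝ) (n : ℕ) : Tsh x n = if n = 0 then 0 else x (n-1) := rfl

lemma Tsh_DS : IsDS Tsh := by
  constructor
  · intro x hx
    set f : ℕ → ℝ := fun n => |Tsh x n| with hf
    have hf0 : f 0 = 0 := by simp [hf, Tsh_apply]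
    have hfs : ∀ n, f (n + 1) = |x n| := by
      intro n; simp [hf, Tsh_apply]
    have hsum : Summable f := by
      rw [← summable_nat_add_iff 1]
      simpa [hfs] using hx
    refine ⟨hsum, ?_⟩
    rw [Summable.tsum_eq_zero_add hsum, hf0]
    simp only [hfs, zero_add]
    exact le_rfl
  · intro x hx
    obtain ⟨C, hC⟩ := hx
    have hC0 : 0 ≤ C := (abs_nonneg _).trans (hC 0)
    have key : ∀ n, |Tsh x n| ≤ supNorm x := by
      intro n
      rw [Tsh_apply]
      by_cases h : n = 0
      · simp [h, supNorm_nonneg x]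
      · simp only [if_neg h]
        exact abs_le_supNorm ⟨C, hC⟩ _
    exact ⟨⟨supNorm x, key⟩, supNorm_le key⟩

lemma Tsh_iter_one (k : ℕ) :
    (⇑Tsh)^[k] (fun _ => (1:ℝ)) = fun s => if s < k then 0 else 1 := by
  induction k with
  | zero => funext s; simp
  | succ k ih =>
    rw [Function.iterate_succ_apply', ih]
    funext s
    rw [Tsh_apply]
    rcases Nat.eq_zero_or_pos s with rfl | hs
    · simp
    · obtain ⟨m, rfl⟩ := Nat.exists_eq_succ_of_ne_zero (Nat.pos_iff_ne_zero.mp hs)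
      by_cases h : m < k <;> simp [Nat.succ_sub_one, h, Nat.succ_lt_succ_iff]

lemma cesaro_Tsh (n s : ℕ) :
    cesaro Tsh n (fun _ => (1:ℝ)) s = (min n (s+1) : ℕ) / (n:ℝ) := by
  rw [cesaro]
  congr 1
  have h1 : ∀ k, (⇑Tsh)^[k] (fun _ => (1:ℝ)) s = if s < k then 0 else 1 := by
    intro k; rw [Tsh_iter_one k]
  rw [Finset.sum_congr rfl (fun k _ => h1 k)]
  have h2 : ∀ k, (if s < k then (0:ℝ) else 1) = if k ≤ s then 1 else 0 := by
    intro k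
    by_cases h : s < k
    · rw [if_pos h, if_neg (by omega)]
    · rw [if_neg h, if_pos (by omega)]
  rw [Finset.sum_congr rfl (fun k _ => h2 k), Finset.sum_boole]
  have h3 : (Finset.range n).filter (fun k => k ≤ s) = Finset.range (min n (s+1)) := by
    ext k
    simp only [Finset.mem_filter, Finset.mem_range, lt_min_iff]
    omega
  rw [h3]
  simp

lemma one_bdd : IsBdd (fun _ => (1:ℝ)) := ⟨1, fun _ => by norm_num⟩

lemma shift_no_limit (x' : ℕ → ℝ) (hx' : IsBdd x') :
    ¬ Tendsto (fun n => supNorm (fun s => cesaro Tsh n (fun _ => (1:ℝ)) s - x' s))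
      atTop (𝓝 0) := by
  intro h
  have hptw : ∀ s, Tendsto (fun n => cesaro Tsh n (fun _ => (1:ℝ)) s) atTop (𝓝 (x' s)) := by
    intro s
    rw [tendsto_iff_dist_tendsto_zero]
    refine squeeze_zero (fun n => dist_nonneg) (fun n => ?_) h
    rw [Real.dist_eq]
    exact abs_le_supNorm (isBdd_sub (cesaro_bdd Tsh_DS one_bdd n).1 hx') s
  have hzero : ∀ s, x' s = 0 := by
    intro s
    have hlim : Tendsto (fun n => cesaro Tsh n (fun _ => (1:ℝ)) s) atTop (𝓝 0) := by
      have he : ∀ᶠ n : ℕ in atTop, ((s+1 : ℕ) : ℝ) / (n:ℝ) = cesaro Tsh n (fun _ => (1:ℝ)) s := by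
        filter_upwards [eventually_ge_atTop (s+1)] with n hn
        rw [cesaro_Tsh, min_eq_right hn]
      refine Tendsto.congr' he ?_
      exact tendsto_const_div_atTop_nhds_zero_nat _
    exact tendsto_nhds_unique (hptw s) hlim
  obtain ⟨N, hN⟩ := (Metric.tendsto_atTop.mp h) (1/2) (by norm_num)
  set n := max N 1 with hn
  have h1 := hN n (le_max_left _ _)
  rw [Real.dist_eq, sub_zero] at h1
  have hn1 : (1:ℕ) ≤ n := le_max_right _ _
  have h2 : cesaro Tsh n (fun _ => (1:ℝ)) n = 1 := by
    rw [cesaro_Tsh, min_eq_left (by omega : n ≤ n + 1)]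
    exact div_self (Nat.cast_ne_zero.mpr (by omega))
  have h3 : |cesaro Tsh n (fun _ => (1:ℝ)) n - x' n| = 1 := by
    rw [h2, hzero n]; norm_num
  have h4 : (1:ℝ) ≤ supNorm (fun s => cesaro Tsh n (fun _ => (1:ℝ)) s - x' s) := by
    have h6 := abs_le_supNorm (isBdd_sub (cesaro_bdd Tsh_DS one_bdd n).1 hx') n
    rw [h3] at h6
    exact h6
  have h5 := (le_abs_self _).trans h1.le
  linarith

end Aux14
namespace Aux14

lemma one_mem_of_not_c0 (E : FullySymmSeqSpace) {x : ℕ → ℝ} (hx : x ∈ E.carrier)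
    (hnc : ¬ Tendsto x atTop (𝓝 0)) : (fun _ => (1:ℝ)) ∈ E.carrier := by
  have hfreq : ∃ ε > (0:ℝ), ∀ N : ℕ, ∃ n ≥ N, ε ≤ |x n| := by
    rw [Metric.tendsto_atTop] at hnc
    push_neg at hnc
    obtain ⟨ε, hε, h⟩ := hnc
    refine ⟨ε, hε, fun N => ?_⟩
    obtain ⟨n, hn, hd⟩ := h N
    rw [Real.dist_eq, sub_zero] at hd
    exact ⟨n, hn, hd⟩
  obtain ⟨ε, hε, hfreq⟩ := hfreq
  set y : ℕ → ℝ := ε⁻¹ • x with hydef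
  have hy : y ∈ E.carrier := E.carrier.smul_mem _ hx
  have hybdd : IsBdd y := E.bdd y hy
  have hyr : ∀ n, (1:ℝ) ≤ rearr y n := by
    intro n
    refine le_rearr hybdd ?_
    intro F hF
    obtain ⟨k, hk, hke⟩ := hfreq (F.sup id + 1)
    refine ⟨k, ?_, ?_⟩
    · intro hkF
      have := Finset.le_sup (f := id) hkF
      simp only [id] at this
      omega
    · have habs : |y k| = ε⁻¹ * |x k| := by
        rw [hydef, Pi.smul_apply, smul_eq_mul, abs_mul, abs_of_pos (inv_pos.mpr hε)]
      rw [habs]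
      calc (1:ℝ) = ε⁻¹ * ε := by field_simp
        _ ≤ ε⁻¹ * |x k| := mul_le_mul_of_nonneg_left hke (le_of_lt (inv_pos.mpr hε))
  have hone_rearr : ∀ n, rearr (fun _ => (1:ℝ)) n ≤ 1 := by
    intro n
    have h1 := rearr_le (x := fun _ => (1:ℝ)) (n := n) (F := (∅ : Finset ℕ))
      (by simp)
    have h2 : (⨆ _ : {k : ℕ // k ∉ (∅ : Finset ℕ)}, |(1:ℝ)|) = 1 := by
      rw [ciSup_const]; norm_num
    rw [h2] at h1
    exact h1
  refine (E.fullySymm y hy (fun _ => (1:ℝ)) one_bdd ?_).1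
  intro k
  exact Finset.sum_le_sum fun n _ => (hone_rearr n).trans (hyr n)

end Aux14

/-- Criterion for the uniform individual ergodic theorem property of a fully symmetric
sequence space: (i) UIET ↔ (ii) `E ⊆ c₀` ↔ (iii) `𝟏 ∉ E`. -/
theorem stmt14 (E : FullySymmSeqSpace) :
    ((∀ x ∈ E.carrier, ∀ T : (ℕ → ℝ) →ₗ[ℝ] (ℕ → ℝ), IsDS T →
        ∃ x' ∈ E.carrier,
          Tendsto (fun n => supNorm (fun s => cesaro T n x s - x' s)) atTop (nhds 0)) ↔
      (∀ x ∈ E.carrier, Tendsto x atTop (nhds 0))) ∧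
    ((∀ x ∈ E.carrier, Tendsto x atTop (nhds 0)) ↔
      (fun _ => (1 : ℝ)) ∉ E.carrier) := by
  constructor
  · constructor
    · intro hi x hx
      by_contra hnc
      have h1 : (fun _ => (1:ℝ)) ∈ E.carrier := Aux14.one_mem_of_not_c0 E hx hnc
      obtain ⟨x', hx', hconv⟩ := hi _ h1 Aux14.Tsh Aux14.Tsh_DS
      exact Aux14.shift_no_limit x' (E.bdd x' hx') hconv
    · intro hii x hx T hT
      obtain ⟨x', hbdd, hphi, hconv⟩ := Aux14.main_conv hT (E.bdd x hx) (hii x hx)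
      refine ⟨x', ?_, hconv⟩
      refine (E.fullySymm x hx x' hbdd ?_).1
      intro k
      exact hphi (k+1)
  · constructor
    · intro hii hone
      have h := hii _ hone
      have h1 : Tendsto (fun _ : ℕ => (1:ℝ)) atTop (𝓝 1) := tendsto_const_nhds
      exact one_ne_zero (tendsto_nhds_unique h1 h)
    · intro h1 x hx
      by_contra hnc
      exact h1 (Aux14.one_mem_of_not_c0 E hx hnc)
end
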